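/- Let G be a group and s ∈ G with |s^G| = 2, and r, ε ∈ G with rs = εsr and ε ≠ 1. Then for all integers m, n, the conjugacy class of εᵐsⁿ is {εᵐsⁿ, εⁿ⁻ᵐsⁿ}. -/

import Mathlib

/-- The conjugacy class of `s` in a group `G`. -/
def conjClass {G : Type*} [Group G] (s : G) : Set G := {x | ∃ g : G, g * s * g⁻¹ = x}

lemma conj_mul_zpow {G : Type*} [Group G] (g a b : G) (m n : ℤ) :
    g * (a ^ m * b ^ n) * g⁻¹ = (g * a * g⁻¹) ^ m * (g * b * g⁻¹) ^ n := by
  rw [conj_zpow, conj_zpow]; group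

/-- Lemma `lem:rs`(3): if `|s^G| = 2` and `r s = ε s r` with `ε ≠ 1`, then for
all integers `m, n` the conjugacy class of `εᵐ sⁿ` is `{εᵐ sⁿ, ε^(n-m) sⁿ}`. -/
theorem stmt_3 {G : Type*} [Group G] (s r ε : G)
    (h2 : (conjClass s).ncard = 2)
    (hrs : r * s = ε * s * r) (hε : ε ≠ 1) :
    ∀ m n : ℤ, conjClass (ε ^ m * s ^ n) = {ε ^ m * s ^ n, ε ^ (n - m) * s ^ n} := by
  have hrsr : r * s * r⁻¹ = ε * s := by rw [hrs]; group
  have hsmem : s ∈ conjClass s := ⟨1, by group⟩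
  have hεsmem : ε * s ∈ conjClass s := ⟨r, hrsr⟩
  have hne : ε * s ≠ s := fun h => hε (by rwa [mul_eq_right] at h)
  have hclosed : ∀ g x, x ∈ conjClass s → g * x * g⁻¹ ∈ conjClass s := by
    rintro g x ⟨h, rfl⟩; exact ⟨g * h, by group⟩
  have hcl : conjClass s = {s, ε * s} := by
    obtain ⟨a, b, hab, hset⟩ := Set.ncard_eq_two.mp h2
    have h1 : s ∈ ({a, b} : Set G) := hset ▸ hsmem
    have h2' : ε * s ∈ ({a, b} : Set G) := hset ▸ hεsmem
    simp only [Set.mem_insert_iff, Set.mem_singleton_iff] at h1 h2'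
    rw [hset]
    rcases h1 with rfl | rfl <;> rcases h2' with h2' | h2'
    · exact absurd h2' hne
    · rw [h2']
    · rw [h2']; exact Set.pair_comm a s
    · exact absurd h2' hne
  have hkey : ∀ g : G, (g * s * g⁻¹ = s ∧ g * ε * g⁻¹ = ε) ∨
      (g * s * g⁻¹ = ε * s ∧ g * ε * g⁻¹ = ε⁻¹) := by
    intro g
    have h1 : g * s * g⁻¹ ∈ ({s, ε * s} : Set G) := hcl ▸ hclosed g s hsmem
    have h2' : g * (ε * s) * g⁻¹ ∈ ({s, ε * s} : Set G) := hcl ▸ hclosed g _ hεsmem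
    have heq : g * (ε * s) * g⁻¹ = (g * ε * g⁻¹) * (g * s * g⁻¹) := by group
    simp only [Set.mem_insert_iff, Set.mem_singleton_iff] at h1 h2'
    rcases h1 with h1 | h1 <;> rcases h2' with h2' | h2' <;> rw [heq, h1] at h2'
    · exfalso
      have h5 : g * ε * g⁻¹ = 1 := mul_eq_right.mp h2'
      apply hε
      have h6 : ε = g⁻¹ * 1 * g := by rw [← h5]; group
      simpa using h6
    · left
      exact ⟨h1, mul_right_cancel h2'⟩
    · right
      refine ⟨h1, ?_⟩
      have h4 : g * ε * g⁻¹ * ε = 1 := by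
        apply mul_right_cancel (b := s)
        rw [one_mul, mul_assoc]
        exact h2'
      exact eq_inv_of_mul_eq_one_left h4
    · exfalso
      have h5 : g * ε * g⁻¹ = 1 := mul_eq_right.mp h2'
      apply hε
      have h6 : ε = g⁻¹ * 1 * g := by rw [← h5]; group
      simpa using h6
  have hcomm : Commute ε s := by
    rcases hkey s with ⟨_, h⟩ | ⟨h, _⟩
    · have : ε * s = s * ε := by
        conv_lhs => rw [← h]
        group
      exact this
    · refine absurd ?_ hne
      conv_lhs => rw [← h]
      group
  intro m n
  have hconj2 : ∀ g : G, g * s * g⁻¹ = ε * s → g * ε * g⁻¹ = ε⁻¹ →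
      g * (ε ^ m * s ^ n) * g⁻¹ = ε ^ (n - m) * s ^ n := by
    intro g hg1 hg2
    rw [conj_mul_zpow, hg1, hg2, hcomm.mul_zpow, ← mul_assoc, inv_zpow',
      ← zpow_add, show -m + n = n - m by ring]
  ext x
  simp only [conjClass, Set.mem_setOf_eq, Set.mem_insert_iff, Set.mem_singleton_iff]
  constructor
  · rintro ⟨g, rfl⟩
    rcases hkey g with ⟨h1, h2'⟩ | ⟨h1, h2'⟩
    · left; rw [conj_mul_zpow, h1, h2']
    · right; exact hconj2 g h1 h2'
  · rintro (rfl | rfl)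
    · exact ⟨1, by group⟩
    · refine ⟨r, ?_⟩
      rcases hkey r with ⟨h1, _⟩ | ⟨h1, h2'⟩
      · exact absurd (hrsr.symm.trans h1) hne
      · exact hconj2 r h1 h2'
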